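/- For a complex number z with Re z < 0, the integral ∫_0^1 Φ(t) t^{-z-1} dt equals -ζ(1-z)/(z-1), where Φ(t) = t * ⌊1/t⌋ is the Ingham function. -/

import Mathlib

open MeasureTheory Set Complex

theorem stmt_4 (z : ℂ) (hz : z.re < 0) :
    ∫ t in Set.Ioc (0:ℝ) 1, ((t * ⌊t⁻¹⌋ : ℝ) : ℂ) * (t : ℂ) ^ (-z - 1) =
      -riemannZeta (1 - z) / (z - 1) := by
  have hw : (0:ℝ) < (-z).re := by simpa using hz
  have hz1 : (1 : ℂ) - z ≠ 0 := by
    intro h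
    have : (1 - z).re = 0 := by rw [h]; simp
    simp [Complex.sub_re] at this
    linarith
  set F : ℕ → ℝ → ℂ := fun n t =>
    Set.indicator (Set.Ioc (0:ℝ) (1/(n+1))) (fun t : ℝ => (t:ℂ) ^ (-z)) t with hF
  -- pointwise rewriting
  have hpt : ∀ t ∈ Set.Ioc (0:ℝ) 1,
      ((t * ⌊t⁻¹⌋ : ℝ) : ℂ) * (t : ℂ) ^ (-z - 1) = ∑' n, F n t := by
    rintro t ⟨ht0, ht1⟩
    have hinv : (1:ℝ) ≤ t⁻¹ := one_le_inv_iff₀.2 ⟨ht0, ht1⟩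
    have hfl0 : (0:ℤ) ≤ ⌊t⁻¹⌋ := Int.floor_nonneg.2 (by linarith)
    set m : ℕ := ⌊t⁻¹⌋.toNat with hm
    have hmz : (⌊t⁻¹⌋ : ℝ) = (m : ℝ) := by
      rw [hm]; exact_mod_cast (Int.toNat_of_nonneg hfl0).symm
    have hmem : ∀ n : ℕ, (t ∈ Set.Ioc (0:ℝ) (1/(n+1))) ↔ n < m := by
      intro n
      have hn1 : (0:ℝ) < (n:ℝ) + 1 := by positivity
      constructor
      · rintro ⟨-, h⟩
        have : (n:ℝ) + 1 ≤ t⁻¹ := by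
          rw [le_inv_comm₀ hn1 ht0]; rwa [one_div] at h
        have : ((n:ℤ) + 1) ≤ ⌊t⁻¹⌋ := Int.le_floor.2 (by push_cast; linarith)
        omega
      · intro h
        have h1 : ((n:ℤ) + 1) ≤ ⌊t⁻¹⌋ := by omega
        have h2 : (n:ℝ) + 1 ≤ t⁻¹ := by
          have := Int.le_floor.1 h1
          push_cast at this ⊢; linarith
        refine ⟨ht0, ?_⟩
        rw [one_div]
        exact (le_inv_comm₀ hn1 ht0).1 h2
    have htsum : ∑' n, F n t = m * (t:ℂ) ^ (-z) := by
      rw [tsum_eq_sum (s := Finset.range m) (by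
        intro n hn
        rw [hF]
        simp only [Set.indicator_apply]
        rw [if_neg]
        intro hmem'
        exact hn (Finset.mem_range.2 ((hmem n).1 hmem')))]
      rw [Finset.sum_congr rfl (fun n hn => ?_), Finset.sum_const, Finset.card_range,
        nsmul_eq_mul]
      rw [hF]
      simp only [Set.indicator_apply]
      rw [if_pos ((hmem n).2 (Finset.mem_range.1 hn))]
    rw [htsum]
    have ht0' : (t:ℂ) ≠ 0 := by exact_mod_cast ht0.ne'
    have h4 := Complex.cpow_add 1 (-z - 1) ht0'
    rw [show (1:ℂ) + (-z - 1) = -z by ring, Complex.cpow_one] at h4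
    rw [h4, hmz]
    push_cast
    ring
  rw [setIntegral_congr_fun measurableSet_Ioc hpt]
  -- integrability of each piece
  have hInt : ∀ n : ℕ, IntegrableOn (fun t : ℝ => (t:ℂ) ^ (-z)) (Set.Ioc (0:ℝ) (1/(n+1))) := by
    intro n
    have := (intervalIntegral.intervalIntegrable_cpow (μ := volume) (r := -z) (a := 0) (b := 1/(n+1)) (Or.inl hw.le)).1
    simpa using this
  have hFint : ∀ n : ℕ, Integrable (F n) (volume.restrict (Set.Ioc (0:ℝ) 1)) := by
    intro n
    rw [hF]
    rw [integrable_indicator_iff measurableSet_Ioc]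
    rw [IntegrableOn, Measure.restrict_restrict measurableSet_Ioc]
    exact (hInt n).mono_set Set.inter_subset_left
  -- summability of norms
  have hw1 : (1:ℝ) < (-z).re + 1 := by linarith
  have hnorm : ∀ n : ℕ, (∫ t in Set.Ioc (0:ℝ) 1, ‖F n t‖) =
      (1/((n:ℝ)+1)) ^ ((-z).re + 1) / ((-z).re + 1) := by
    intro n
    set a : ℝ := 1/((n:ℝ)+1) with ha
    have ha0 : 0 < a := by positivity
    have ha1 : a ≤ 1 := by
      rw [ha, div_le_one (by positivity)]; simp
    have : ∀ t : ℝ, ‖F n t‖ =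
        Set.indicator (Set.Ioc (0:ℝ) a) (fun t : ℝ => ‖(t:ℂ) ^ (-z)‖) t := by
      intro t; rw [hF]; exact norm_indicator_eq_indicator_norm _ _
    simp_rw [this]
    rw [integral_indicator measurableSet_Ioc, Measure.restrict_restrict measurableSet_Ioc,
      Set.Ioc_inter_Ioc, max_self, min_eq_left ha1]
    rw [setIntegral_congr_fun measurableSet_Ioc
      (fun t ht => by
        rw [Complex.norm_cpow_eq_rpow_re_of_pos ht.1])]
    rw [← intervalIntegral.integral_of_le ha0.le,
      integral_rpow (Or.inl (by linarith : (-1:ℝ) < (-z).re)),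
      Real.zero_rpow (by positivity : (-z).re + 1 ≠ 0), sub_zero]
  have hsum : Summable fun n : ℕ => ∫ t in Set.Ioc (0:ℝ) 1, ‖F n t‖ := by
    simp_rw [hnorm]
    apply Summable.div_const
    have h1 : Summable fun n : ℕ => ((n:ℝ)) ^ (-((-z).re + 1)) :=
      Real.summable_nat_rpow.2 (by linarith)
    have h2 : Summable fun n : ℕ => (((n+1:ℕ)):ℝ) ^ (-((-z).re + 1)) :=
      (summable_nat_add_iff 1).2 h1
    refine h2.congr fun n => ?_
    push_cast
    rw [one_div, Real.inv_rpow (by positivity), ← Real.rpow_neg (by positivity)]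
  rw [← integral_tsum_of_summable_integral_norm hFint hsum]
  -- compute each integral
  have hval : ∀ n : ℕ, (∫ t in Set.Ioc (0:ℝ) 1, F n t) =
      (((1/((n:ℝ)+1)) : ℝ) : ℂ) ^ (1 - z) / (1 - z) := by
    intro n
    set a : ℝ := 1/((n:ℝ)+1) with ha
    have ha0 : 0 < a := by positivity
    have ha1 : a ≤ 1 := by
      rw [ha, div_le_one (by positivity)]; simp
    rw [hF]
    rw [integral_indicator measurableSet_Ioc, Measure.restrict_restrict measurableSet_Ioc,
      Set.Ioc_inter_Ioc, max_self, min_eq_left ha1]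
    rw [← intervalIntegral.integral_of_le ha0.le,
      integral_cpow (Or.inl (by simp only [Complex.neg_re]; linarith : (-1:ℝ) < (-z).re)),
      Complex.ofReal_zero, Complex.zero_cpow (by
        intro h
        rw [show -z + 1 = 1 - z by ring] at h
        exact hz1 h), sub_zero,
      show -z + 1 = 1 - z by ring]
  rw [tsum_congr hval, tsum_div_const]
  have hcast : ∀ n : ℕ, ((((1/((n:ℝ)+1)) : ℝ) : ℂ)) ^ (1 - z) = 1 / ((n:ℂ)+1) ^ (1 - z) := by
    intro n
    have : (((1/((n:ℝ)+1)) : ℝ) : ℂ) = (((n+1:ℕ) : ℂ))⁻¹ := by push_cast; ring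
    rw [this, Complex.inv_cpow _ _ (by
      rw [Complex.natCast_arg]
      exact Real.pi_ne_zero.symm), one_div]
    norm_num
  rw [tsum_congr hcast]
  have hre : 1 < (1 - z).re := by simp [Complex.sub_re]; linarith
  rw [← zeta_eq_tsum_one_div_nat_add_one_cpow hre]
  rw [neg_div, ← div_neg, neg_sub]
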